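/- For every positive integer m, the natural density of the set of positive integers n such that the ternary expansion of 2^n begins with the ternary expansion of m (i.e., 2^n = 3^k·m + r for some k ≥ 0 and 0 ≤ r < 3^k) equals log₃(m+1) − log₃(m). -/

import Mathlib

open Filter Classical
noncomputable section

open MeasureTheory Set

namespace BenfordAux


lemma avg_geom_tendsto_zero {z : ℂ} (hz : ‖z‖ = 1) (h1 : z ≠ 1) :
    Tendsto (fun N : ℕ => (∑ n ∈ Finset.range N, z ^ n) / (N : ℂ)) atTop (nhds 0) := by
  refine squeeze_zero_norm (a := fun N : ℕ => (2 / ‖z - 1‖) / N) (fun N => ?_)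
    (tendsto_const_div_atTop_nhds_zero_nat _)
  rw [norm_div, Complex.norm_natCast, geom_sum_eq h1, norm_div]
  have h2 : ‖z ^ N - 1‖ ≤ 2 := by
    calc ‖z ^ N - 1‖ ≤ ‖z ^ N‖ + ‖(1:ℂ)‖ := norm_sub_le _ _
    _ = 2 := by rw [norm_pow, hz]; norm_num
  have h3 : ‖z ^ N - 1‖ / ‖z - 1‖ ≤ 2 / ‖z - 1‖ :=
    div_le_div_of_nonneg_right h2 (norm_nonneg _)
  exact div_le_div_of_nonneg_right h3 (Nat.cast_nonneg N)

lemma fourier_pt_add (k : ℤ) (u v : AddCircle (1:ℝ)) :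
    fourier k (u + v) = fourier k u * fourier k v := by
  simp only [fourier_apply, zsmul_add, AddCircle.toCircle_add, Circle.coe_mul]

lemma fourier_orbit (k : ℤ) (x a : AddCircle (1:ℝ)) (n : ℕ) :
    fourier k (x + n • a) = fourier k x * (fourier k a : ℂ) ^ n := by
  induction n with
  | zero => simp
  | succ n ih =>
      rw [succ_nsmul, ← add_assoc, fourier_pt_add, ih, pow_succ, mul_assoc]

lemma fourier_ne_one {k : ℤ} (hk : k ≠ 0) {a : AddCircle (1:ℝ)} (ha : k • a ≠ 0) :
    (fourier k a : ℂ) ≠ 1 := by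
  intro h
  apply ha
  apply AddCircle.injective_toCircle (one_ne_zero)
  have h0 : ((AddCircle.toCircle (0 : AddCircle (1:ℝ))) : ℂ) = 1 := by
    have := fourier_zero (T := 1) (x := (0 : AddCircle (1:ℝ)))
    rwa [fourier_apply, zero_smul] at this
  apply Subtype.coe_injective
  show ((AddCircle.toCircle (k • a)) : ℂ) = ((AddCircle.toCircle 0) : ℂ)
  rw [h0]
  exact h

lemma weyl_fourier {a : AddCircle (1:ℝ)} (ha : ∀ k : ℤ, k ≠ 0 → k • a ≠ 0)
    (x : AddCircle (1:ℝ)) {k : ℤ} (hk : k ≠ 0) :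
    Tendsto (fun N : ℕ => (∑ n ∈ Finset.range N, (fourier k (x + n • a) : ℂ)) / (N : ℂ))
      atTop (nhds 0) := by
  have hnorm : ‖(fourier k a : ℂ)‖ = 1 := Circle.norm_coe _
  have h := (avg_geom_tendsto_zero hnorm (fourier_ne_one hk (ha k hk))).const_mul
    (fourier k x : ℂ)
  rw [mul_zero] at h
  refine h.congr fun N => ?_
  simp_rw [fourier_orbit k x a]
  rw [← Finset.mul_sum, mul_div_assoc]


lemma cm_integrable (f : C(AddCircle (1:ℝ), ℂ)) : Integrable (fun t => f t) volume :=
  f.continuous.integrable_of_hasCompactSupport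
    ((isClosed_tsupport _).isCompact)

lemma cm_integrable_real (f : C(AddCircle (1:ℝ), ℝ)) : Integrable (fun t => f t) volume :=
  f.continuous.integrable_of_hasCompactSupport
    ((isClosed_tsupport _).isCompact)

lemma integral_fourier_zero' : (∫ t : AddCircle (1:ℝ), (fourier 0 t : ℂ)) = 1 := by
  simp_rw [fourier_zero]
  rw [integral_const]
  rw [measureReal_def, UnitAddCircle.measure_univ]
  simp

lemma integral_fourier_ne {k : ℤ} (hk : k ≠ 0) :
    (∫ t : AddCircle (1:ℝ), (fourier k t : ℂ)) = 0 := by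
  rw [← UnitAddCircle.integral_preimage 0 (fun t => (fourier k t : ℂ))]
  have hc : (2 * (Real.pi:ℂ) * Complex.I * k) ≠ 0 := by
    apply mul_ne_zero
    apply mul_ne_zero
    apply mul_ne_zero
    · norm_num
    · exact_mod_cast Complex.ofReal_ne_zero.mpr Real.pi_ne_zero
    · exact Complex.I_ne_zero
    · exact_mod_cast hk
  have : ∀ x : ℝ, (fourier k (x : AddCircle (1:ℝ)) : ℂ)
      = Complex.exp ((2 * (Real.pi:ℂ) * Complex.I * k) * x) := by
    intro x
    rw [fourier_coe_apply]
    norm_num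
  simp_rw [this]
  rw [← intervalIntegral.integral_of_le (by norm_num : (0:ℝ) ≤ 0 + 1)]
  rw [integral_exp_mul_complex hc]
  have h1 : (2 * (Real.pi:ℂ) * Complex.I * k) * ((0:ℝ) + 1 : ℝ) = k * (2 * Real.pi * Complex.I) := by
    push_cast; ring
  have h2 : (2 * (Real.pi:ℂ) * Complex.I * k) * ((0:ℝ) : ℂ) = 0 := by push_cast; ring
  rw [h1, h2, Complex.exp_int_mul_two_pi_mul_I, Complex.exp_zero, sub_self, zero_div]

/-- Ergodic averages of continuous functions along an irrational rotation
converge to the integral. -/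
theorem tendsto_average (a : AddCircle (1:ℝ)) (ha : ∀ k : ℤ, k ≠ 0 → k • a ≠ 0)
    (x : AddCircle (1:ℝ)) (f : C(AddCircle (1:ℝ), ℂ)) :
    Tendsto (fun N : ℕ => (∑ n ∈ Finset.range N, f (x + n • a)) / (N:ℂ)) atTop
      (nhds (∫ t : AddCircle (1:ℝ), f t)) := by
  set S : Set C(AddCircle (1:ℝ), ℂ) :=
    {g | Tendsto (fun N : ℕ => (∑ n ∈ Finset.range N, g (x + n • a)) / (N:ℂ)) atTop
      (nhds (∫ t : AddCircle (1:ℝ), g t))} with hS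
  have hmem : ∀ g ∈ Submodule.span ℂ (Set.range (fourier (T := 1))), g ∈ S := by
    intro g hg
    induction hg using Submodule.span_induction with
    | mem g hgen =>
        obtain ⟨k, rfl⟩ := hgen
        by_cases hk : k = 0
        · subst hk
          rw [hS, mem_setOf_eq, integral_fourier_zero']
          have hev : (fun _ : ℕ => (1:ℂ)) =ᶠ[atTop]
              (fun N : ℕ => (∑ n ∈ Finset.range N, (fourier 0 (x + n • a) : ℂ)) / (N:ℂ)) := by
            filter_upwards [eventually_ge_atTop 1] with N hN
            have hNne : (N:ℂ) ≠ 0 := Nat.cast_ne_zero.mpr (by omega)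
            simp only [fourier_zero]
            rw [Finset.sum_const, Finset.card_range, nsmul_eq_mul, mul_one, div_self hNne]
          exact Tendsto.congr' hev tendsto_const_nhds
        · rw [hS, mem_setOf_eq, integral_fourier_ne hk]
          exact weyl_fourier ha x hk
    | zero =>
        simp only [hS, mem_setOf_eq, ContinuousMap.zero_apply, Finset.sum_const, smul_zero]
        simpa using tendsto_const_nhds
    | add g h hgm hhm hg hh =>
        simp only [hS, mem_setOf_eq, ContinuousMap.add_apply] at hg hh ⊢
        rw [integral_add (cm_integrable g) (cm_integrable h)]
        have := hg.add hh
        refine this.congr fun N => ?_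
        rw [Finset.sum_add_distrib, add_div]
    | smul c g hgm hg =>
        simp only [hS, mem_setOf_eq, ContinuousMap.smul_apply, smul_eq_mul] at hg ⊢
        rw [integral_const_mul]
        have := hg.const_mul c
        refine this.congr fun N => ?_
        rw [← Finset.mul_sum, mul_div_assoc]
  have hclosed : IsClosed S := by
    refine isClosed_of_closure_subset fun f hf => ?_
    rw [hS, mem_setOf_eq, Metric.tendsto_atTop]
    intro ε hε
    obtain ⟨g, hgS, hfg⟩ := Metric.mem_closure_iff.mp hf (ε/4) (by positivity)
    obtain ⟨N₀, hN₀⟩ := Metric.tendsto_atTop.mp hgS (ε/4) (by positivity)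
    refine ⟨max N₀ 1, fun N hN => ?_⟩
    have hN1 : 1 ≤ N := le_trans (le_max_right _ _) hN
    have hNpos : (0:ℝ) < N := by exact_mod_cast hN1
    have h1 : dist ((∑ n ∈ Finset.range N, f (x + n • a)) / (N:ℂ))
        ((∑ n ∈ Finset.range N, g (x + n • a)) / (N:ℂ)) ≤ ε/4 := by
      rw [dist_eq_norm, div_sub_div_same, ← Finset.sum_sub_distrib, norm_div,
        Complex.norm_natCast]
      have hb : ‖∑ n ∈ Finset.range N, (f (x + n • a) - g (x + n • a))‖
          ≤ (N:ℝ) * (ε/4) := by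
        calc ‖∑ n ∈ Finset.range N, (f (x + n • a) - g (x + n • a))‖
            ≤ ∑ n ∈ Finset.range N, ‖f (x + n • a) - g (x + n • a)‖ :=
              norm_sum_le _ _
        _ ≤ ∑ n ∈ Finset.range N, (ε/4) := by
              refine Finset.sum_le_sum fun i _ => ?_
              rw [← dist_eq_norm]
              exact le_of_lt (lt_of_le_of_lt (ContinuousMap.dist_apply_le_dist _) hfg)
        _ = (N:ℝ) * (ε/4) := by rw [Finset.sum_const, Finset.card_range, nsmul_eq_mul]
      calc ‖∑ n ∈ Finset.range N, (f (x + n • a) - g (x + n • a))‖ / (N:ℝ)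
          ≤ ((N:ℝ) * (ε/4)) / (N:ℝ) := div_le_div_of_nonneg_right hb (le_of_lt hNpos)
      _ = ε/4 := by field_simp
    have h2 : dist (∫ t : AddCircle (1:ℝ), g t) (∫ t : AddCircle (1:ℝ), f t) ≤ ε/4 := by
      rw [dist_eq_norm, ← integral_sub (cm_integrable g) (cm_integrable f)]
      have hb : ∀ᵐ t : AddCircle (1:ℝ) ∂volume, ‖g t - f t‖ ≤ dist f g := by
        filter_upwards with t
        rw [← dist_eq_norm, dist_comm]
        exact ContinuousMap.dist_apply_le_dist _
      have := MeasureTheory.norm_integral_le_of_norm_le_const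
        (μ := (volume : Measure (AddCircle (1:ℝ)))) hb
      rw [measureReal_def, UnitAddCircle.measure_univ] at this
      simp only [ENNReal.toReal_one, mul_one] at this
      refine le_trans this ?_
      exact le_of_lt (lt_of_lt_of_le hfg (by linarith))
    have h3 := hN₀ N (le_trans (le_max_left _ _) hN)
    have h4 := dist_triangle4 ((∑ n ∈ Finset.range N, f (x + n • a)) / (N:ℂ))
      ((∑ n ∈ Finset.range N, g (x + n • a)) / (N:ℂ))
      (∫ t : AddCircle (1:ℝ), g t) (∫ t : AddCircle (1:ℝ), f t)
    exact lt_of_le_of_lt h4 (by linarith)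
  have htop : closure ((Submodule.span ℂ (Set.range (fourier (T := 1))) : Submodule ℂ C(AddCircle (1:ℝ), ℂ)) : Set C(AddCircle (1:ℝ), ℂ)) = univ := by
    rw [← Submodule.topologicalClosure_coe, span_fourier_closure_eq_top]
    rfl
  have : f ∈ closure ((Submodule.span ℂ (Set.range (fourier (T := 1))) : Submodule ℂ C(AddCircle (1:ℝ), ℂ)) : Set C(AddCircle (1:ℝ), ℂ)) := by
    rw [htop]; trivial
  exact hclosed.closure_subset_iff.mpr (fun g hg => hmem g hg) this

theorem tendsto_average_real (a : AddCircle (1:ℝ)) (ha : ∀ k : ℤ, k ≠ 0 → k • a ≠ 0)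
    (x : AddCircle (1:ℝ)) (f : C(AddCircle (1:ℝ), ℝ)) :
    Tendsto (fun N : ℕ => (∑ n ∈ Finset.range N, f (x + n • a)) / (N:ℝ)) atTop
      (nhds (∫ t : AddCircle (1:ℝ), f t)) := by
  set F : C(AddCircle (1:ℝ), ℂ) :=
    ⟨fun t => (f t : ℂ), Complex.continuous_ofReal.comp f.continuous⟩ with hF
  have h := tendsto_average a ha x F
  have hint : (∫ t : AddCircle (1:ℝ), F t) = ((∫ t : AddCircle (1:ℝ), f t : ℝ) : ℂ) := by
    simp only [hF, ContinuousMap.coe_mk]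
    exact integral_ofReal
  rw [hint] at h
  have h2 := (Complex.continuous_re.tendsto _).comp h
  simp only [Complex.ofReal_re] at h2
  refine h2.congr fun N => ?_
  simp only [Function.comp_apply, hF, ContinuousMap.coe_mk]
  rw [← Complex.ofReal_sum]
  rw [show ((N:ℂ)) = ((N:ℝ) : ℂ) by push_cast; rfl]
  rw [← Complex.ofReal_div, Complex.ofReal_re]


def ramp (t : ℝ) : ℝ := max 0 (min 1 t)

lemma ramp_continuous : Continuous ramp :=
  continuous_const.max (continuous_const.min continuous_id)

lemma ramp_nonneg (t : ℝ) : 0 ≤ ramp t := le_max_left _ _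

lemma ramp_le_one (t : ℝ) : ramp t ≤ 1 :=
  max_le zero_le_one (min_le_left _ _)

lemma ramp_of_nonpos {t : ℝ} (h : t ≤ 0) : ramp t = 0 :=
  max_eq_left (le_trans (min_le_right _ _) h)

lemma ramp_of_one_le {t : ℝ} (h : 1 ≤ t) : ramp t = 1 := by
  rw [ramp, min_eq_left h, max_eq_right zero_le_one]

lemma ramp_of_mem {t : ℝ} (h0 : 0 ≤ t) (h1 : t ≤ 1) : ramp t = t := by
  rw [ramp, min_eq_right h1, max_eq_right h0]

lemma ramp_integral {ε u a v : ℝ} (hε : 0 < ε) (hu : u ≤ a) (hv : a + ε ≤ v) :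
    ∫ x in u..v, ramp ((x - a) / ε) = v - a - ε / 2 := by
  have hint : ∀ b d : ℝ, IntervalIntegrable (fun x => ramp ((x - a) / ε)) volume b d :=
    fun b d => (ramp_continuous.comp ((continuous_id.sub continuous_const).div_const ε)).intervalIntegrable _ _
  have hsplit2 : ∫ x in a..v, ramp ((x - a) / ε) =
      (∫ x in a..(a+ε), ramp ((x - a) / ε)) + ∫ x in (a+ε)..v, ramp ((x - a) / ε) :=
    (intervalIntegral.integral_add_adjacent_intervals (hint _ _) (hint _ _)).symm
  have hsplit : ∫ x in u..v, ramp ((x - a) / ε) =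
      (∫ x in u..a, ramp ((x - a) / ε)) + ∫ x in a..v, ramp ((x - a) / ε) :=
    (intervalIntegral.integral_add_adjacent_intervals (hint _ _) (hint _ _)).symm
  have h1 : ∫ x in u..a, ramp ((x - a) / ε) = 0 := by
    rw [intervalIntegral.integral_congr (g := fun _ => (0:ℝ)) ?_, intervalIntegral.integral_const]
    · simp
    · intro x hx
      rw [uIcc_of_le hu] at hx
      exact ramp_of_nonpos (div_nonpos_of_nonpos_of_nonneg (by linarith [hx.2]) hε.le)
  have h2 : ∫ x in a..(a+ε), ramp ((x - a) / ε) = ε / 2 := by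
    rw [intervalIntegral.integral_congr (g := fun x => (x - a) / ε) ?_]
    · rw [intervalIntegral.integral_div]
      rw [show (fun x : ℝ => x - a) = fun x : ℝ => id x - a from rfl]
      rw [intervalIntegral.integral_sub (continuous_id.intervalIntegrable _ _) intervalIntegrable_const]
      simp only [id_eq]
      rw [integral_id, intervalIntegral.integral_const]
      field_simp
      ring
    · intro x hx
      rw [uIcc_of_le (by linarith)] at hx
      refine ramp_of_mem (div_nonneg (by linarith [hx.1]) hε.le) ?_
      rw [div_le_one hε]
      linarith [hx.2]
  have h3 : ∫ x in (a+ε)..v, ramp ((x - a) / ε) = v - (a + ε) := by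
    rw [intervalIntegral.integral_congr (g := fun _ => (1:ℝ)) ?_, intervalIntegral.integral_const]
    · simp
    · intro x hx
      rw [uIcc_of_le hv] at hx
      refine ramp_of_one_le ?_
      rw [le_div_iff₀ hε]
      linarith [hx.1]
  rw [hsplit, hsplit2, h1, h2, h3]
  ring

lemma ramp_integral' {ε u b v : ℝ} (hε : 0 < ε) (hu : u + ε ≤ b) (hv : b ≤ v) :
    ∫ x in u..v, ramp ((b - x) / ε) = b - u - ε / 2 := by
  have h := intervalIntegral.integral_comp_sub_left (a := u) (b := v)
    (fun y => ramp (y / ε)) b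
  rw [h]
  have h2 : ∫ y in (b-v)..(b-u), ramp (y / ε) = ∫ y in (b-v)..(b-u), ramp ((y - 0) / ε) := by
    simp
  rw [h2, ramp_integral hε (by linarith) (by linarith)]
  ring


lemma coe_fract (t : ℝ) : ((Int.fract t : ℝ) : AddCircle (1:ℝ)) = (t : AddCircle (1:ℝ)) := by
  rw [Int.fract, sub_eq_add_neg]
  rw [show ((t + -(⌊t⌋:ℝ) : ℝ) : AddCircle (1:ℝ))
      = (t : AddCircle (1:ℝ)) + ((-(⌊t⌋:ℝ) : ℝ) : AddCircle (1:ℝ)) from rfl]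
  have : ((-(⌊t⌋:ℝ) : ℝ) : AddCircle (1:ℝ)) = 0 := by
    rw [AddCircle.coe_eq_zero_iff]
    exact ⟨-⌊t⌋, by rw [zsmul_eq_mul]; push_cast; ring⟩
  rw [this, add_zero]

lemma coe_one_eq_zero : ((1:ℝ) : AddCircle (1:ℝ)) = ((0:ℝ) : AddCircle (1:ℝ)) := by
  have h1 : ((1:ℝ) : AddCircle (1:ℝ)) = 0 := by
    rw [AddCircle.coe_eq_zero_iff]; exact ⟨1, by norm_num⟩
  have h0 : ((0:ℝ) : AddCircle (1:ℝ)) = 0 := by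
    rw [AddCircle.coe_eq_zero_iff]; exact ⟨0, by norm_num⟩
  rw [h1, h0]

theorem equi_count (α β c : ℝ) (hα : ∀ k : ℤ, k ≠ 0 → ∀ j : ℤ, (k:ℝ) * α ≠ j)
    (hc0 : 0 < c) (hc1 : c < 1) :
    Tendsto (fun N : ℕ => (((Finset.Icc 1 N).filter
      (fun n : ℕ => Int.fract (n * α - β) < c)).card : ℝ) / (N:ℝ)) atTop (nhds c) := by
  set a : AddCircle (1:ℝ) := (α : AddCircle (1:ℝ)) with haa
  have ha : ∀ k : ℤ, k ≠ 0 → k • a ≠ 0 := by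
    intro k hk h
    rw [haa, ← AddCircle.coe_zsmul, AddCircle.coe_eq_zero_iff] at h
    obtain ⟨j, hj⟩ := h
    refine hα k hk j ?_
    rw [← zsmul_eq_mul, ← hj, zsmul_eq_mul, mul_one]
  set x : AddCircle (1:ℝ) := ((α - β : ℝ) : AddCircle (1:ℝ)) with hxx
  have hpt : ∀ j : ℕ, x + j • a = ((((1 + j : ℕ) : ℝ) * α - β : ℝ) : AddCircle (1:ℝ)) := by
    intro j
    rw [hxx, haa, ← AddCircle.coe_nsmul]
    rw [show ((α - β : ℝ) : AddCircle (1:ℝ)) + ((j • α : ℝ) : AddCircle (1:ℝ))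
        = (((α - β) + j • α : ℝ) : AddCircle (1:ℝ)) from rfl]
    congr 1
    push_cast
    ring
  rw [Metric.tendsto_atTop]
  intro ε hε
  set δ : ℝ := min (ε/4) (min c (1-c)) / 2 with hδdef
  have hδ : 0 < δ := by
    apply div_pos _ (by norm_num)
    exact lt_min (by linarith) (lt_min hc0 (by linarith))
  have hδε : δ ≤ ε/8 := by
    have := min_le_left (ε/4) (min c (1-c)); rw [hδdef]; linarith
  have hδc : δ ≤ c := by
    have h1 := min_le_right (ε/4) (min c (1-c))
    have h2 := min_le_left c (1-c)
    rw [hδdef]; linarith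
  have hδ1 : c + δ ≤ 1 := by
    have h1 := min_le_right (ε/4) (min c (1-c))
    have h2 := min_le_right c (1-c)
    rw [hδdef]; linarith
  have hδlt1 : δ ≤ 1 := by linarith
  set hup : ℝ → ℝ := fun y => ramp ((c + δ - y)/δ) + ramp ((y - (1 - δ))/δ) with hhup
  set glo : ℝ → ℝ := fun y => max 0 (ramp ((c - y)/δ) + ramp (y/δ) - 1) with hglo
  have hup_cont : Continuous hup := by
    apply Continuous.add
    · exact ramp_continuous.comp ((continuous_const.sub continuous_id).div_const δ)
    · exact ramp_continuous.comp ((continuous_id.sub continuous_const).div_const δ)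
  have glo_cont : Continuous glo := by
    apply continuous_const.max
    apply Continuous.sub _ continuous_const
    apply Continuous.add
    · exact ramp_continuous.comp ((continuous_const.sub continuous_id).div_const δ)
    · exact ramp_continuous.comp (continuous_id.div_const δ)
  have hup0 : hup 0 = 1 := by
    rw [hhup]
    simp only
    rw [sub_zero, zero_sub, ramp_of_one_le (by rw [le_div_iff₀ hδ]; linarith),
        ramp_of_nonpos (div_nonpos_of_nonpos_of_nonneg (by linarith) hδ.le)]
    ring
  have hup1 : hup 1 = 1 := by
    rw [hhup]
    simp only
    rw [ramp_of_nonpos (div_nonpos_of_nonpos_of_nonneg (by linarith) hδ.le),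
        ramp_of_one_le (by rw [le_div_iff₀ hδ]; linarith)]
    ring
  have hup_ends : hup 0 = hup (0 + 1) := by rw [zero_add, hup0, hup1]
  have glo0 : glo 0 = 0 := by
    rw [hglo]
    simp only
    rw [sub_zero, ramp_of_one_le (by rw [le_div_iff₀ hδ]; linarith),
        show (0:ℝ)/δ = 0 by ring, ramp_of_nonpos (le_refl 0)]
    norm_num
  have glo1 : glo 1 = 0 := by
    rw [hglo]
    simp only
    rw [ramp_of_nonpos (div_nonpos_of_nonpos_of_nonneg (by linarith) hδ.le),
        ramp_of_one_le (by rw [le_div_iff₀ hδ]; linarith)]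
    norm_num
  have glo_ends : glo 0 = glo (0 + 1) := by rw [zero_add, glo0, glo1]
  set Hup : C(AddCircle (1:ℝ), ℝ) := ⟨AddCircle.liftIco 1 0 hup,
    AddCircle.liftIco_continuous hup_ends (hup_cont.continuousOn)⟩ with hHup
  set Glo : C(AddCircle (1:ℝ), ℝ) := ⟨AddCircle.liftIco 1 0 glo,
    AddCircle.liftIco_continuous glo_ends (glo_cont.continuousOn)⟩ with hGlo
  have hHup_coe : ∀ y : ℝ, y ∈ Ico (0:ℝ) 1 → Hup (y : AddCircle (1:ℝ)) = hup y := by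
    intro y hy
    rw [hHup]
    show AddCircle.liftIco 1 0 hup (y : AddCircle (1:ℝ)) = hup y
    refine AddCircle.liftIco_coe_apply ?_
    rw [zero_add]; exact hy
  have hGlo_coe : ∀ y : ℝ, y ∈ Ico (0:ℝ) 1 → Glo (y : AddCircle (1:ℝ)) = glo y := by
    intro y hy
    rw [hGlo]
    show AddCircle.liftIco 1 0 glo (y : AddCircle (1:ℝ)) = glo y
    refine AddCircle.liftIco_coe_apply ?_
    rw [zero_add]; exact hy
  -- integrals
  have hioc_up : EqOn (fun y : ℝ => Hup (y : AddCircle (1:ℝ))) hup (Ioc (0:ℝ) (0+1)) := by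
    intro y hy
    rcases eq_or_lt_of_le hy.2 with h1 | h1
    · have hy1 : y = 1 := by rw [h1]; norm_num
      subst hy1
      simp only
      rw [coe_one_eq_zero, hHup_coe 0 (by constructor <;> norm_num), hup0, hup1]
    · exact hHup_coe y ⟨le_of_lt hy.1, by simpa using h1⟩
  have hioc_lo : EqOn (fun y : ℝ => Glo (y : AddCircle (1:ℝ))) glo (Ioc (0:ℝ) (0+1)) := by
    intro y hy
    rcases eq_or_lt_of_le hy.2 with h1 | h1
    · have hy1 : y = 1 := by rw [h1]; norm_num
      subst hy1
      simp only
      rw [coe_one_eq_zero, hGlo_coe 0 (by constructor <;> norm_num), glo0, glo1]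
    · exact hGlo_coe y ⟨le_of_lt hy.1, by simpa using h1⟩
  have cont1 : Continuous fun y : ℝ => ramp ((c + δ - y)/δ) :=
    ramp_continuous.comp ((continuous_const.sub continuous_id).div_const δ)
  have cont2 : Continuous fun y : ℝ => ramp ((y - (1 - δ))/δ) :=
    ramp_continuous.comp ((continuous_id.sub continuous_const).div_const δ)
  have cont3 : Continuous fun y : ℝ => ramp ((c - y)/δ) :=
    ramp_continuous.comp ((continuous_const.sub continuous_id).div_const δ)
  have cont4 : Continuous fun y : ℝ => ramp (y/δ) :=
    ramp_continuous.comp (continuous_id.div_const δ)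
  have hint_up : (∫ t : AddCircle (1:ℝ), Hup t) = c + δ := by
    rw [← UnitAddCircle.integral_preimage 0 (fun t => Hup t)]
    rw [MeasureTheory.setIntegral_congr_fun measurableSet_Ioc hioc_up]
    rw [← intervalIntegral.integral_of_le (by norm_num : (0:ℝ) ≤ 0+1)]
    simp only [hhup]
    rw [intervalIntegral.integral_add (cont1.intervalIntegrable _ _) (cont2.intervalIntegrable _ _)]
    rw [show (0:ℝ)+1 = 1 by norm_num]
    rw [ramp_integral' hδ (by linarith) hδ1]
    rw [ramp_integral hδ (by linarith) (by linarith)]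
    ring
  have hint_lo : c - δ ≤ (∫ t : AddCircle (1:ℝ), Glo t) := by
    rw [← UnitAddCircle.integral_preimage 0 (fun t => Glo t)]
    rw [MeasureTheory.setIntegral_congr_fun measurableSet_Ioc hioc_lo]
    rw [← intervalIntegral.integral_of_le (by norm_num : (0:ℝ) ≤ 0+1)]
    have hmono : ∫ y in (0:ℝ)..(0+1), (ramp ((c - y)/δ) + ramp (y/δ) - 1)
        ≤ ∫ y in (0:ℝ)..(0+1), glo y := by
      apply intervalIntegral.integral_mono_on (by norm_num)
      · exact ((cont3.add cont4).sub continuous_const).intervalIntegrable _ _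
      · exact glo_cont.intervalIntegrable _ _
      · intro y _
        simp only [hglo]
        exact le_max_right _ _
    refine le_trans ?_ hmono
    rw [intervalIntegral.integral_sub (f := fun y => ramp ((c - y)/δ) + ramp (y/δ)) ((cont3.add cont4).intervalIntegrable _ _)
      intervalIntegrable_const]
    rw [intervalIntegral.integral_add (cont3.intervalIntegrable _ _)
      (cont4.intervalIntegrable _ _)]
    rw [show (0:ℝ)+1 = 1 by norm_num]
    rw [ramp_integral' hδ (by linarith) (by linarith)]
    have h4 : ∫ y in (0:ℝ)..1, ramp (y/δ) = ∫ y in (0:ℝ)..1, ramp ((y - 0)/δ) := by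
      simp
    rw [h4, ramp_integral hδ (le_refl 0) (by linarith)]
    rw [intervalIntegral.integral_const]
    simp only [smul_eq_mul]
    ring_nf
    linarith
  -- counting inequalities
  have hcard : ∀ N : ℕ, (((Finset.Icc 1 N).filter
      (fun n : ℕ => Int.fract (n * α - β) < c)).card : ℝ)
      = ∑ j ∈ Finset.range N, (if Int.fract (((1 + j : ℕ) : ℝ) * α - β) < c then (1:ℝ) else 0) := by
    intro N
    rw [Finset.card_filter]
    rw [← Finset.Ico_add_one_right_eq_Icc, Finset.sum_Ico_eq_sum_range]
    push_cast
    rfl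
  have hkey : ∀ (j : ℕ),
      ((if Int.fract (((1 + j : ℕ) : ℝ) * α - β) < c then (1:ℝ) else 0) ≤ Hup (x + j • a))
      ∧ (Glo (x + j • a) ≤ (if Int.fract (((1 + j : ℕ) : ℝ) * α - β) < c then (1:ℝ) else 0)) := by
    intro j
    set t : ℝ := ((1 + j : ℕ) : ℝ) * α - β with ht
    set u : ℝ := Int.fract t with hu
    have hu0 : 0 ≤ u := Int.fract_nonneg t
    have hu1 : u < 1 := Int.fract_lt_one t
    have hcoe : x + j • a = (u : AddCircle (1:ℝ)) := by
      rw [hpt j, ← ht, ← coe_fract t, ← hu]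
    rw [hcoe, hHup_coe u ⟨hu0, hu1⟩, hGlo_coe u ⟨hu0, hu1⟩]
    constructor
    · by_cases hcase : u < c
      · simp only [← hu, hcase, if_pos]
        rw [hhup]
        simp only
        have h1 : ramp ((c + δ - u)/δ) = 1 := ramp_of_one_le (by rw [le_div_iff₀ hδ]; linarith)
        rw [h1]
        linarith [ramp_nonneg ((u - (1 - δ))/δ)]
      · simp only [← hu, hcase, if_neg, not_false_iff]
        rw [hhup]
        simp only
        have := ramp_nonneg ((c + δ - u)/δ)
        have := ramp_nonneg ((u - (1 - δ))/δ)
        linarith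
    · by_cases hcase : u < c
      · simp only [← hu, hcase, if_pos]
        rw [hglo]
        simp only
        apply max_le (by norm_num)
        have := ramp_le_one ((c - u)/δ)
        have := ramp_le_one (u/δ)
        linarith
      · simp only [← hu, hcase, if_neg, not_false_iff]
        rw [hglo]
        simp only
        have h1 : ramp ((c - u)/δ) = 0 :=
          ramp_of_nonpos (div_nonpos_of_nonpos_of_nonneg (by linarith [not_lt.mp hcase]) hδ.le)
        rw [h1]
        have := ramp_le_one (u/δ)
        apply le_of_eq
        apply max_eq_left
        linarith
  have hup_bound : ∀ N : ℕ, (((Finset.Icc 1 N).filter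
      (fun n : ℕ => Int.fract (n * α - β) < c)).card : ℝ)
      ≤ ∑ j ∈ Finset.range N, Hup (x + j • a) := by
    intro N
    rw [hcard N]
    exact Finset.sum_le_sum fun j _ => (hkey j).1
  have hlo_bound : ∀ N : ℕ, ∑ j ∈ Finset.range N, Glo (x + j • a)
      ≤ (((Finset.Icc 1 N).filter (fun n : ℕ => Int.fract (n * α - β) < c)).card : ℝ) := by
    intro N
    rw [hcard N]
    exact Finset.sum_le_sum fun j _ => (hkey j).2
  -- limits
  have hH := tendsto_average_real a ha x Hup
  rw [hint_up] at hH
  have hG := tendsto_average_real a ha x Glo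
  obtain ⟨N₁, hN₁⟩ := Metric.tendsto_atTop.mp hH δ hδ
  obtain ⟨N₂, hN₂⟩ := Metric.tendsto_atTop.mp hG δ hδ
  refine ⟨max (max N₁ N₂) 1, fun N hN => ?_⟩
  have hN1 : N₁ ≤ N := le_trans (le_trans (le_max_left _ _) (le_max_left _ _)) hN
  have hN2 : N₂ ≤ N := le_trans (le_trans (le_max_right _ _) (le_max_left _ _)) hN
  have hNpos : (0:ℝ) < N := by
    have : 1 ≤ N := le_trans (le_max_right _ _) hN
    exact_mod_cast this
  have h1 := hN₁ N hN1
  have h2 := hN₂ N hN2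
  rw [Real.dist_eq, abs_lt] at h1 h2 ⊢
  set D : ℝ := (((Finset.Icc 1 N).filter
      (fun n : ℕ => Int.fract (n * α - β) < c)).card : ℝ) / (N:ℝ) with hD
  have hDup : D ≤ (∑ j ∈ Finset.range N, Hup (x + j • a)) / (N:ℝ) :=
    div_le_div_of_nonneg_right (hup_bound N) hNpos.le
  have hDlo : (∑ j ∈ Finset.range N, Glo (x + j • a)) / (N:ℝ) ≤ D :=
    div_le_div_of_nonneg_right (hlo_bound N) hNpos.le
  constructor
  · -- -ε < D - c
    have : c - 2*δ < D := by
      have := h2.1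
      linarith [hint_lo, hDlo]
    linarith
  · have : D < c + 2*δ := by
      have := h1.2
      linarith [hDup]
    linarith

lemma nat_pow_neq {a b : ℕ} (ha : 0 < a) : (2:ℝ) ^ a ≠ 3 ^ b := by
  intro h
  have h4 : (2^a : ℕ) = 3^b := by exact_mod_cast h
  have e1 : 2 ∣ 2^a := dvd_pow_self 2 (by omega)
  have e2 : ¬ 2 ∣ 3^b := by
    intro hdvd
    have := Nat.Prime.dvd_of_dvd_pow Nat.prime_two hdvd
    omega
  rw [h4] at e1
  exact e2 e1

lemma helper_log (a b : ℕ) (ha : 0 < a) (hab : (a:ℝ) * Real.log 2 = (b:ℝ) * Real.log 3) :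
    False := by
  have h2 : Real.log ((2:ℝ)^a) = Real.log ((3:ℝ)^b) := by
    rw [Real.log_pow, Real.log_pow]; exact_mod_cast hab
  have h3 : (2:ℝ)^a = 3^b := by
    have e1 := Real.exp_log (show (0:ℝ) < 2^a by positivity)
    have e2 := Real.exp_log (show (0:ℝ) < 3^b by positivity)
    rw [← e1, ← e2, h2]
  exact nat_pow_neq ha h3

lemma log23_not_rat : ∀ k : ℤ, k ≠ 0 → ∀ j : ℤ, (k:ℝ) * (Real.log 2 / Real.log 3) ≠ j := by
  intro k hk j h
  have hL3 : (0:ℝ) < Real.log 3 := Real.log_pos (by norm_num)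
  have hL2 : (0:ℝ) < Real.log 2 := Real.log_pos (by norm_num)
  have h' : (k:ℝ) * Real.log 2 = (j:ℝ) * Real.log 3 := by
    field_simp at h
    linarith [h]
  rcases lt_or_gt_of_ne hk with hneg | hpos
  · -- k < 0, so j < 0
    have hjneg : (j:ℝ) < 0 := by
      have hkneg : (k:ℝ) < 0 := by exact_mod_cast hneg
      nlinarith
    have hj : j < 0 := by exact_mod_cast hjneg
    apply helper_log (-k).toNat (-j).toNat (by omega)
    have h1 : ((-k).toNat : ℝ) = -(k:ℝ) := by
      have h' : (((-k).toNat : ℤ) : ℝ) = ((-k : ℤ) : ℝ) := by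
        rw [Int.toNat_of_nonneg (by omega : (0:ℤ) ≤ -k)]
      push_cast at h'
      exact_mod_cast h'
    have h2 : ((-j).toNat : ℝ) = -(j:ℝ) := by
      have h' : (((-j).toNat : ℤ) : ℝ) = ((-j : ℤ) : ℝ) := by
        rw [Int.toNat_of_nonneg (by omega : (0:ℤ) ≤ -j)]
      push_cast at h'
      exact_mod_cast h'
    rw [h1, h2]
    linarith
  · have hjpos : (0:ℝ) < (j:ℝ) := by
      have hkpos : (0:ℝ) < (k:ℝ) := by exact_mod_cast hpos
      nlinarith
    have hj : 0 < j := by exact_mod_cast hjpos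
    apply helper_log k.toNat j.toNat (by omega)
    have h1 : (k.toNat : ℝ) = (k:ℝ) := by
      have h' : ((k.toNat : ℤ) : ℝ) = ((k : ℤ) : ℝ) := by
        rw [Int.toNat_of_nonneg (by omega : (0:ℤ) ≤ k)]
      exact_mod_cast h'
    have h2 : (j.toNat : ℝ) = (j:ℝ) := by
      have h' : ((j.toNat : ℤ) : ℝ) = ((j : ℤ) : ℝ) := by
        rw [Int.toNat_of_nonneg (by omega : (0:ℤ) ≤ j)]
      exact_mod_cast h'
    rw [h1, h2]
    exact h'

lemma pred_iff (m : ℕ) (hm : 0 < m) (hc1 : Real.log (↑m + 1) / Real.log 3 - Real.log ↑m / Real.log 3 < 1)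
    (n : ℕ) (hn : (m:ℝ) ≤ 2 ^ n) :
    (∃ k r : ℕ, 2 ^ n = 3 ^ k * m + r ∧ r < 3 ^ k) ↔
    Int.fract ((n:ℝ) * (Real.log 2 / Real.log 3) - Real.log ↑m / Real.log 3)
      < Real.log (↑m + 1) / Real.log 3 - Real.log ↑m / Real.log 3 := by
  have hL3 : (0:ℝ) < Real.log 3 := Real.log_pos (by norm_num)
  have hmpos : (0:ℝ) < (m:ℝ) := by exact_mod_cast hm
  set t : ℝ := (n:ℝ) * (Real.log 2 / Real.log 3) - Real.log ↑m / Real.log 3 with htdef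
  set c : ℝ := Real.log (↑m + 1) / Real.log 3 - Real.log ↑m / Real.log 3 with hcdef
  have ht : t * Real.log 3 = (n:ℝ) * Real.log 2 - Real.log m := by
    rw [htdef]; field_simp
  have hc : c * Real.log 3 = Real.log (↑m + 1) - Real.log m := by
    rw [hcdef]; field_simp
  -- real inequality characterizations
  have hiff1 : ∀ k : ℕ, ((3:ℝ)^k * m ≤ 2 ^ n) ↔ (k:ℝ) ≤ t := by
    intro k
    have hpos1 : (0:ℝ) < 3^k * m := by positivity
    have hpos2 : (0:ℝ) < 2^n := by positivity
    rw [← Real.log_le_log_iff hpos1 hpos2]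
    rw [Real.log_mul (by positivity) (ne_of_gt hmpos), Real.log_pow, Real.log_pow]
    constructor
    · intro h
      have : (k:ℝ) * Real.log 3 ≤ t * Real.log 3 := by rw [ht]; linarith
      exact le_of_mul_le_mul_right this hL3
    · intro h
      have : (k:ℝ) * Real.log 3 ≤ t * Real.log 3 := by
        exact mul_le_mul_of_nonneg_right h hL3.le
      rw [ht] at this; linarith
  have hiff2 : ∀ k : ℕ, ((2:ℝ) ^ n < 3^k * ((m:ℝ) + 1)) ↔ t < (k:ℝ) + c := by
    intro k
    have hpos1 : (0:ℝ) < 3^k * ((m:ℝ)+1) := by positivity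
    have hpos2 : (0:ℝ) < 2^n := by positivity
    rw [← Real.log_lt_log_iff hpos2 hpos1]
    rw [Real.log_mul (by positivity) (by positivity), Real.log_pow, Real.log_pow]
    constructor
    · intro h
      have : t * Real.log 3 < ((k:ℝ) + c) * Real.log 3 := by
        rw [ht, add_mul, hc]; linarith
      exact lt_of_mul_lt_mul_right this hL3.le
    · intro h
      have : t * Real.log 3 < ((k:ℝ) + c) * Real.log 3 :=
        mul_lt_mul_of_pos_right h hL3
      rw [ht, add_mul, hc] at this; linarith
  constructor
  · rintro ⟨k, r, heq, hr⟩
    -- nat inequalities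
    have hle : 3^k * m ≤ 2^n := by omega
    have hlt : 2^n < 3^k * (m+1) := by
      have : 3^k * (m+1) = 3^k * m + 3^k := by ring
      omega
    have hleR : (3:ℝ)^k * m ≤ 2^n := by exact_mod_cast hle
    have hltR : (2:ℝ)^n < 3^k * ((m:ℝ)+1) := by exact_mod_cast hlt
    have h1 := (hiff1 k).mp hleR
    have h2 := (hiff2 k).mp hltR
    have hfloor : ⌊t⌋ = (k:ℤ) := by
      rw [Int.floor_eq_iff]
      constructor
      · exact_mod_cast h1
      · push_cast
        linarith
    have hfract : Int.fract t = t - (⌊t⌋ : ℝ) := rfl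
    rw [hfract, hfloor]
    push_cast
    linarith
  · intro hfr
    have ht0 : 0 ≤ t := by
      have hlog : Real.log m ≤ Real.log (2^n) :=
        Real.log_le_log hmpos hn
      rw [Real.log_pow] at hlog
      have : 0 ≤ t * Real.log 3 := by rw [ht]; linarith
      nlinarith
    set k : ℕ := (⌊t⌋).toNat with hk
    have hkf : (k:ℝ) = ⌊t⌋ := by
      have h' : ((k:ℕ):ℤ) = ⌊t⌋ := by
        rw [hk]; exact Int.toNat_of_nonneg (Int.floor_nonneg.mpr ht0)
      exact_mod_cast h'
    have h1 : (k:ℝ) ≤ t := by rw [hkf]; exact Int.floor_le t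
    have h2 : t < (k:ℝ) + c := by
      have : Int.fract t = t - ⌊t⌋ := rfl
      rw [this] at hfr
      rw [hkf]
      linarith
    have hleR := (hiff1 k).mpr h1
    have hltR := (hiff2 k).mpr h2
    have hle : 3^k * m ≤ 2^n := by exact_mod_cast hleR
    have hlt : 2^n < 3^k * (m+1) := by exact_mod_cast hltR
    refine ⟨k, 2^n - 3^k * m, by omega, by
      have : 3^k * (m+1) = 3^k * m + 3^k := by ring
      omega⟩


end BenfordAux

open BenfordAux

/-- Benford's Law for ternary digits: for every positive integer `m`, the natural density of
the set of `n` such that the ternary expansion of `2^n` begins with that of `m`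
(i.e. `2^n = 3^k·m + r` with `0 ≤ r < 3^k`) equals `log₃(m+1) − log₃ m`. -/
theorem benford_ternary (m : ℕ) (hm : 0 < m) :
    Tendsto (fun N : ℕ =>
        (((Finset.Icc 1 N).filter (fun n : ℕ =>
            ∃ k r : ℕ, 2 ^ n = 3 ^ k * m + r ∧ r < 3 ^ k)).card : ℝ) / (N : ℝ))
      atTop
      (nhds (Real.log (m + 1) / Real.log 3 - Real.log m / Real.log 3)) := by
  have hL3 : (0:ℝ) < Real.log 3 := Real.log_pos (by norm_num)
  have hmpos : (0:ℝ) < (m:ℝ) := by exact_mod_cast hm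
  set α : ℝ := Real.log 2 / Real.log 3 with hα
  set β : ℝ := Real.log ↑m / Real.log 3 with hβ
  set c : ℝ := Real.log (↑m + 1) / Real.log 3 - Real.log ↑m / Real.log 3 with hc
  have hc0 : 0 < c := by
    rw [hc, div_sub_div_same]
    apply div_pos _ hL3
    have : Real.log ↑m < Real.log (↑m + 1) := Real.log_lt_log hmpos (by linarith)
    linarith
  have hc1 : c < 1 := by
    rw [hc, div_sub_div_same, div_lt_one hL3]
    have h1 : Real.log (↑m + 1) < Real.log (3 * ↑m) := by
      apply Real.log_lt_log (by linarith)
      have : (1:ℝ) ≤ (m:ℝ) := by exact_mod_cast hm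
      linarith
    have h2 : Real.log (3 * ↑m) = Real.log 3 + Real.log ↑m := by
      rw [Real.log_mul (by norm_num) (ne_of_gt hmpos)]
    linarith
  have hQ := equi_count α β c log23_not_rat hc0 hc1
  -- predicates agree for n ≥ m
  have hagree : ∀ n : ℕ, m ≤ n →
      ((∃ k r : ℕ, 2 ^ n = 3 ^ k * m + r ∧ r < 3 ^ k) ↔
        Int.fract ((n:ℝ) * α - β) < c) := by
    intro n hn
    apply pred_iff m hm hc1
    have h1 : m ≤ 2^n := le_of_lt (lt_of_le_of_lt hn Nat.lt_two_pow_self)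
    exact_mod_cast h1
  -- card difference bound
  set P : ℕ → Prop := fun n => ∃ k r : ℕ, 2 ^ n = 3 ^ k * m + r ∧ r < 3 ^ k with hP
  set Q : ℕ → Prop := fun n => Int.fract ((n:ℝ) * α - β) < c with hQdef
  have hdiffcard : ∀ N : ℕ,
      |(((Finset.Icc 1 N).filter P).card : ℝ) - (((Finset.Icc 1 N).filter Q).card : ℝ)|
        ≤ (m : ℝ) := by
    intro N
    have hsub1 : (Finset.Icc 1 N).filter P ⊆ ((Finset.Icc 1 N).filter Q) ∪ (Finset.Icc 1 m) := by
      intro n hn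
      rw [Finset.mem_filter] at hn
      rcases le_or_gt m n with h | h
      · exact Finset.mem_union_left _ (Finset.mem_filter.mpr ⟨hn.1, (hagree n h).mp hn.2⟩)
      · apply Finset.mem_union_right
        rw [Finset.mem_Icc]
        have := Finset.mem_Icc.mp hn.1
        omega
    have hsub2 : (Finset.Icc 1 N).filter Q ⊆ ((Finset.Icc 1 N).filter P) ∪ (Finset.Icc 1 m) := by
      intro n hn
      rw [Finset.mem_filter] at hn
      rcases le_or_gt m n with h | h
      · exact Finset.mem_union_left _ (Finset.mem_filter.mpr ⟨hn.1, (hagree n h).mpr hn.2⟩)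
      · apply Finset.mem_union_right
        rw [Finset.mem_Icc]
        have := Finset.mem_Icc.mp hn.1
        omega
    have hc1' : ((Finset.Icc 1 N).filter P).card ≤ ((Finset.Icc 1 N).filter Q).card + m := by
      calc ((Finset.Icc 1 N).filter P).card
          ≤ (((Finset.Icc 1 N).filter Q) ∪ (Finset.Icc 1 m)).card := Finset.card_le_card hsub1
      _ ≤ ((Finset.Icc 1 N).filter Q).card + (Finset.Icc 1 m).card := Finset.card_union_le _ _
      _ = ((Finset.Icc 1 N).filter Q).card + m := by rw [Nat.card_Icc]; omega
    have hc2' : ((Finset.Icc 1 N).filter Q).card ≤ ((Finset.Icc 1 N).filter P).card + m := by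
      calc ((Finset.Icc 1 N).filter Q).card
          ≤ (((Finset.Icc 1 N).filter P) ∪ (Finset.Icc 1 m)).card := Finset.card_le_card hsub2
      _ ≤ ((Finset.Icc 1 N).filter P).card + (Finset.Icc 1 m).card := Finset.card_union_le _ _
      _ = ((Finset.Icc 1 N).filter P).card + m := by rw [Nat.card_Icc]; omega
    rw [abs_le]
    constructor
    · have : (((Finset.Icc 1 N).filter Q).card : ℝ) ≤ ((Finset.Icc 1 N).filter P).card + m := by
        exact_mod_cast hc2'
      linarith
    · have : (((Finset.Icc 1 N).filter P).card : ℝ) ≤ ((Finset.Icc 1 N).filter Q).card + m := by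
        exact_mod_cast hc1'
      linarith
  have hdiff : Tendsto (fun N : ℕ =>
      (((Finset.Icc 1 N).filter P).card : ℝ)/(N:ℝ) - (((Finset.Icc 1 N).filter Q).card : ℝ)/(N:ℝ))
      atTop (nhds 0) := by
    apply squeeze_zero_norm (a := fun N : ℕ => (m:ℝ)/(N:ℝ)) _ (tendsto_const_div_atTop_nhds_zero_nat _)
    intro N
    rw [Real.norm_eq_abs, div_sub_div_same, abs_div, Nat.abs_cast]
    rcases Nat.eq_zero_or_pos N with h | h
    · subst h; simp
    · apply div_le_div_of_nonneg_right (hdiffcard N) (by positivity)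
  have := hQ.add hdiff
  rw [add_zero] at this
  refine this.congr fun N => ?_
  ring
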